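/- Let $k$ be a field of characteristic $p > 0$ and let $B = k\langle x, d\rangle/(dx - xd - 1, d^p)$, a free left $k[x]$-module with basis $1, d, \dots, d^{p-1}$. Write elements of $B \otimes_{k[x]} B$ uniquely as $\sum_{0 \le i,j \le p-1} f_{ij}(x)\, d^i \otimes d^j$. If such an element is annihilated by right multiplication by $d \otimes 1 - 1 \otimes d$, then $f_{ij} = 0$ whenever $i + j < p - 1$. -/

import Mathlib

/-- The defining relations `d * x = x * d + 1` and `d^p = 0` of the reduced Weyl
algebra `B = k⟨x,d⟩/(dx - xd - 1, d^p)` (generator `false` is `x`, `true` is `d`). -/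
inductive RWRel (k : Type) [Field k] (p : ℕ) :
    FreeAlgebra k Bool → FreeAlgebra k Bool → Prop
  | weyl : RWRel k p (FreeAlgebra.ι k true * FreeAlgebra.ι k false)
      (FreeAlgebra.ι k false * FreeAlgebra.ι k true + 1)
  | dp : RWRel k p (FreeAlgebra.ι k true ^ p) 0

/-- The generator `x` of the reduced Weyl algebra. -/
noncomputable def Bx (k : Type) [Field k] (p : ℕ) : RingQuot (RWRel k p) :=
  RingQuot.mkAlgHom k (RWRel k p) (FreeAlgebra.ι k false)

/-- The generator `d` of the reduced Weyl algebra. -/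
noncomputable def Bd (k : Type) [Field k] (p : ℕ) : RingQuot (RWRel k p) :=
  RingQuot.mkAlgHom k (RWRel k p) (FreeAlgebra.ι k true)
set_option maxHeartbeats 1000000
set_option maxSynthPendingDepth 3
set_option synthInstance.maxHeartbeats 400000

open scoped TensorProduct

/-- The canonical map `k[x] → B` sending `X` to `x`. -/
noncomputable def phi (k : Type) [Field k] (p : ℕ) : Polynomial k →+* RingQuot (RWRel k p) :=
  (Polynomial.aeval (Bx k p)).toRingHom

/-- `B` as a `k[x]`-module via left multiplication through `phi`. -/
noncomputable instance (k : Type) [Field k] (p : ℕ) :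
    Module (Polynomial k) (RingQuot (RWRel k p)) :=
  Module.compHom _ (phi k p)

/-- Right multiplication by `c` on `B`, as a `k[x]`-linear map. -/
noncomputable def mulRightLin (k : Type) [Field k] (p : ℕ) (c : RingQuot (RWRel k p)) :
    RingQuot (RWRel k p) →ₗ[Polynomial k] RingQuot (RWRel k p) where
  toFun a := a * c
  map_add' a b := add_mul a b c
  map_smul' f a := by
    show (phi k p f * a) * c = phi k p f * (a * c)
    rw [mul_assoc]

/-- Right multiplication by `δ = d ⊗ 1 - 1 ⊗ d` on `B ⊗_{k[x]} B`, acting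
componentwise on pure tensors. -/
noncomputable def rdelta (k : Type) [Field k] (p : ℕ) :
    RingQuot (RWRel k p) ⊗[Polynomial k] RingQuot (RWRel k p) →ₗ[Polynomial k]
      RingQuot (RWRel k p) ⊗[Polynomial k] RingQuot (RWRel k p) :=
  TensorProduct.map (mulRightLin k p (Bd k p))
      (LinearMap.id : RingQuot (RWRel k p) →ₗ[Polynomial k] RingQuot (RWRel k p)) -
    TensorProduct.map
      (LinearMap.id : RingQuot (RWRel k p) →ₗ[Polynomial k] RingQuot (RWRel k p))
      (mulRightLin k p (Bd k p))

/-- Right multiplication by `σ = ∑ d^(p-1-i) ⊗ d^i` on `B ⊗_{k[x]} B`, acting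
componentwise on pure tensors. -/
noncomputable def rsigma (k : Type) [Field k] (p : ℕ) :
    RingQuot (RWRel k p) ⊗[Polynomial k] RingQuot (RWRel k p) →ₗ[Polynomial k]
      RingQuot (RWRel k p) ⊗[Polynomial k] RingQuot (RWRel k p) :=
  ∑ i ∈ Finset.range p,
    TensorProduct.map (mulRightLin k p (Bd k p ^ (p - 1 - i)))
      (mulRightLin k p (Bd k p ^ i))

/-- The element `δ = d ⊗ 1 - 1 ⊗ d` of `B ⊗_{k[x]} B`. -/
noncomputable def deltaElem (k : Type) [Field k] (p : ℕ) :
    RingQuot (RWRel k p) ⊗[Polynomial k] RingQuot (RWRel k p) :=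
  (Bd k p) ⊗ₜ[Polynomial k] (1 : RingQuot (RWRel k p))
    - (1 : RingQuot (RWRel k p)) ⊗ₜ[Polynomial k] (Bd k p)

/-- The element `σ = ∑_{i=0}^{p-1} d^(p-1-i) ⊗ d^i` of `B ⊗_{k[x]} B`. -/
noncomputable def sigmaElem (k : Type) [Field k] (p : ℕ) :
    RingQuot (RWRel k p) ⊗[Polynomial k] RingQuot (RWRel k p) :=
  ∑ i ∈ Finset.range p, (Bd k p ^ (p - 1 - i)) ⊗ₜ[Polynomial k] (Bd k p ^ i)

noncomputable instance (k : Type) [Field k] (p : ℕ) :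
    Zero (RingQuot (RWRel k p) ⊗[Polynomial k] RingQuot (RWRel k p)) :=
  ((inferInstance : AddCommMonoid
    (RingQuot (RWRel k p) ⊗[Polynomial k] RingQuot (RWRel k p)))).toAddMonoid.toZero

/-! ### Auxiliary development: a faithful-enough representation of `B`.

We represent `B` on `k[X]` by `x ↦ (multiplication by X)` and `d ↦ d/dX`, and use it to
extract the `k[x]`-coefficients of an element of `B` in the basis `1, d, …, d^(p-1)`. -/

section AuxRep

open Polynomial

variable (k : Type) [Field k] (p : ℕ)

/-- In characteristic `p`, the `p`-th power of the derivative vanishes on `k[X]`. -/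
theorem derivative_pow_char [CharP k p] (hp : p.Prime) :
    (Polynomial.derivative : Module.End k (Polynomial k)) ^ p = 0 := by
  apply LinearMap.ext
  intro q
  induction q using Polynomial.induction_on' with
  | add a b ha hb => rw [map_add, ha, hb]; simp
  | monomial n a =>
    rw [Module.End.pow_apply, ← Polynomial.C_mul_X_pow_eq_monomial,
      Polynomial.iterate_derivative_C_mul, Polynomial.iterate_derivative_X_pow_eq_natCast_mul]
    have h0 : ((Nat.descFactorial n p : ℕ) : Polynomial k) = 0 := by
      rw [(CharP.cast_eq_zero_iff (Polynomial k) p _)]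
      exact dvd_trans (Nat.dvd_factorial hp.pos le_rfl) (Nat.factorial_dvd_descFactorial n p)
    rw [h0]
    simp

/-- The representation of the free algebra: `x ↦ X·`, `d ↦ d/dX`. -/
noncomputable def rho0 : FreeAlgebra k Bool →ₐ[k] Module.End k (Polynomial k) :=
  FreeAlgebra.lift k (fun b => if b then (Polynomial.derivative : Module.End k (Polynomial k))
    else Algebra.lmul k (Polynomial k) X)

theorem rho0_rel [CharP k p] (hp : p.Prime) :
    ∀ ⦃x y : FreeAlgebra k Bool⦄, RWRel k p x y → rho0 k x = rho0 k y := by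
  rintro x y (h | h)
  · simp only [map_mul, map_add, map_one, rho0, FreeAlgebra.lift_ι_apply, if_true, Bool.false_eq_true, if_false]
    apply LinearMap.ext
    intro q
    simp only [Module.End.mul_apply, LinearMap.add_apply, Module.End.one_apply, Algebra.coe_lmul_eq_mul, LinearMap.mul_apply']
    show Polynomial.derivative (X * q) = X * Polynomial.derivative q + q
    rw [Polynomial.derivative_mul, Polynomial.derivative_X]
    ring
  · rw [map_pow, map_zero, rho0, FreeAlgebra.lift_ι_apply]
    simp only [if_true]
    exact derivative_pow_char k p hp

/-- The representation of `B` on `k[X]`. -/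
noncomputable def rho [CharP k p] (hp : p.Prime) :
    RingQuot (RWRel k p) →ₐ[k] Module.End k (Polynomial k) :=
  RingQuot.liftAlgHom k ⟨rho0 k, rho0_rel k p hp⟩

theorem rho_Bd [CharP k p] (hp : p.Prime) :
    rho k p hp (Bd k p) = (Polynomial.derivative : Module.End k (Polynomial k)) := by
  rw [Bd, rho, RingQuot.liftAlgHom_mkAlgHom_apply, rho0, FreeAlgebra.lift_ι_apply, if_pos rfl]

theorem rho_Bx [CharP k p] (hp : p.Prime) :
    rho k p hp (Bx k p) = Algebra.lmul k (Polynomial k) X := by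
  rw [Bx, rho, RingQuot.liftAlgHom_mkAlgHom_apply, rho0, FreeAlgebra.lift_ι_apply]
  simp

theorem rho_phi [CharP k p] (hp : p.Prime) (g : Polynomial k) :
    rho k p hp (phi k p g) = Algebra.lmul k (Polynomial k) g := by
  show rho k p hp (Polynomial.aeval (Bx k p) g) = _
  rw [← Polynomial.aeval_algHom_apply (rho k p hp) (Bx k p) g, rho_Bx,
    Polynomial.aeval_algHom_apply (Algebra.lmul k (Polynomial k)) X g,
    Polynomial.aeval_X_left_apply]

/-- Recursive extraction of the coefficient of `∂^j` from an operator of the form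
`∑ f_i ∂^i`, using its values on `1, X, X², …`. -/
noncomputable def coefE : ℕ → Module.End k (Polynomial k) → Polynomial k
  | j, D => ((Nat.factorial j : k))⁻¹ •
      (D (X ^ j) - ∑ i ∈ (Finset.range j).attach,
        ((Nat.descFactorial j (i : ℕ) : k) •
          (X ^ (j - (i : ℕ)) * coefE (i : ℕ) D)))
  decreasing_by exact Finset.mem_range.mp i.2

theorem coefE_def (j : ℕ) (D : Module.End k (Polynomial k)) :
    coefE k j D = ((Nat.factorial j : k))⁻¹ •
      (D (X ^ j) - ∑ i ∈ Finset.range j,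
        ((Nat.descFactorial j i : k) • (X ^ (j - i) * coefE k i D))) := by
  rw [coefE, ← Finset.sum_attach (Finset.range j)
    (fun i => (Nat.descFactorial j i : k) • (X ^ (j - i) * coefE k i D))]

theorem coefE_add (j : ℕ) (D D' : Module.End k (Polynomial k)) :
    coefE k j (D + D') = coefE k j D + coefE k j D' := by
  induction j using Nat.strong_induction_on with
  | _ j ih =>
    rw [coefE_def, coefE_def, coefE_def, LinearMap.add_apply]
    have hs : ∑ i ∈ Finset.range j,
        ((Nat.descFactorial j i : k) • (X ^ (j - i) * coefE k i (D + D'))) =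
        (∑ i ∈ Finset.range j, ((Nat.descFactorial j i : k) • (X ^ (j - i) * coefE k i D))) +
        (∑ i ∈ Finset.range j, ((Nat.descFactorial j i : k) • (X ^ (j - i) * coefE k i D'))) := by
      rw [← Finset.sum_add_distrib]
      refine Finset.sum_congr rfl fun i hi => ?_
      rw [ih i (Finset.mem_range.mp hi), mul_add, smul_add]
    rw [hs, ← smul_add]
    congr 1
    abel

theorem coefE_lmul (j : ℕ) (g : Polynomial k) (D : Module.End k (Polynomial k)) :
    coefE k j (Algebra.lmul k (Polynomial k) g * D) = g * coefE k j D := by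
  induction j using Nat.strong_induction_on with
  | _ j ih =>
    rw [coefE_def, coefE_def]
    have happ : (Algebra.lmul k (Polynomial k) g * D) (X ^ j) = g * D (X ^ j) := rfl
    have hs : ∑ i ∈ Finset.range j,
        ((Nat.descFactorial j i : k) •
          (X ^ (j - i) * coefE k i (Algebra.lmul k (Polynomial k) g * D))) =
        g * ∑ i ∈ Finset.range j,
          ((Nat.descFactorial j i : k) • (X ^ (j - i) * coefE k i D)) := by
      rw [Finset.mul_sum]
      refine Finset.sum_congr rfl fun i hi => ?_
      rw [ih i (Finset.mem_range.mp hi), mul_left_comm, mul_smul_comm]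
    rw [happ, hs, ← mul_sub, mul_smul_comm]

theorem coefE_derivative_pow [CharP k p] (hp : p.Prime) (j m : ℕ) :
    j < p → coefE k j ((Polynomial.derivative : Module.End k (Polynomial k)) ^ m) =
      if m = j then 1 else 0 := by
  induction j using Nat.strong_induction_on with
  | _ j ih =>
    intro hj
    have hfac : ((Nat.factorial j : k)) ≠ 0 := by
      rw [Ne, CharP.cast_eq_zero_iff k p]
      intro hdvd
      exact absurd ((Nat.Prime.dvd_factorial hp).mp hdvd) (not_le.mpr hj)
    have happ : ((Polynomial.derivative : Module.End k (Polynomial k)) ^ m) (X ^ j) =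
        ((Nat.descFactorial j m : k)) • (X ^ (j - m) : Polynomial k) := by
      rw [Module.End.pow_apply, Polynomial.iterate_derivative_X_pow_eq_smul]
    have hsum : ∑ i ∈ Finset.range j,
        ((Nat.descFactorial j i : k) •
          (X ^ (j - i) * coefE k i ((Polynomial.derivative : Module.End k (Polynomial k)) ^ m))) =
        if m ∈ Finset.range j then
          ((Nat.descFactorial j m : k) • ((X : Polynomial k) ^ (j - m) * 1)) else 0 := by
      refine (Finset.sum_congr rfl fun i hi => ?_).trans
        (Finset.sum_ite_eq (Finset.range j) m
          (fun i => (Nat.descFactorial j i : k) • ((X : Polynomial k) ^ (j - i) * 1)))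
      rw [ih i (Finset.mem_range.mp hi) (lt_trans (Finset.mem_range.mp hi) hj)]
      split_ifs with h
      · subst h; rfl
      · simp
    rw [coefE_def, happ, hsum]
    rcases lt_trichotomy m j with h | h | h
    · rw [if_pos (Finset.mem_range.mpr h), if_neg (Nat.ne_of_lt h), mul_one, sub_self, smul_zero]
    · subst h
      rw [if_neg (by simp), if_pos rfl, sub_zero, Nat.descFactorial_self, Nat.sub_self,
        pow_zero, smul_smul, inv_mul_cancel₀ hfac, one_smul]
    · rw [if_neg (by simp [Nat.le_of_lt h]), Nat.descFactorial_eq_zero_iff_lt.mpr h,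
        if_neg (by omega : m ≠ j)]
      simp

end AuxRep

section CoeffMaps

open Polynomial

variable (k : Type) [Field k] (p : ℕ) [CharP k p]

/-- Extraction of the coefficient of `d^j`, as a `k[x]`-linear map on `B`. -/
noncomputable def cB (hp : p.Prime) (j : ℕ) :
    RingQuot (RWRel k p) →ₗ[Polynomial k] Polynomial k where
  toFun a := coefE k j (rho k p hp a)
  map_add' a b := by
    show coefE k j (rho k p hp (a + b)) = _
    rw [map_add, coefE_add]
  map_smul' g a := by
    show coefE k j (rho k p hp (phi k p g * a)) = g * coefE k j (rho k p hp a)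
    rw [map_mul, rho_phi, coefE_lmul]

theorem cB_pow (hp : p.Prime) (j : ℕ) (m : ℕ) (hj : j < p) :
    cB k p hp j (Bd k p ^ m) = if m = j then 1 else 0 := by
  show coefE k j (rho k p hp (Bd k p ^ m)) = _
  rw [map_pow, rho_Bd]
  exact coefE_derivative_pow k p hp j m hj

/-- The `(a,b)` coefficient functional on `B ⊗ B`. -/
noncomputable def lam (hp : p.Prime) (a b : ℕ) :
    RingQuot (RWRel k p) ⊗[Polynomial k] RingQuot (RWRel k p) →ₗ[Polynomial k] Polynomial k :=
  (LinearMap.mul' (Polynomial k) (Polynomial k)).comp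
    (TensorProduct.map (cB k p hp a) (cB k p hp b))

theorem lam_tmul (hp : p.Prime) (a b : ℕ) (u v : RingQuot (RWRel k p)) :
    lam k p hp a b (u ⊗ₜ[Polynomial k] v) = cB k p hp a u * cB k p hp b v := by
  simp [lam, TensorProduct.map_tmul, LinearMap.mul'_apply]

end CoeffMaps

/-- If `∑ f_ij • (d^i ⊗ d^j)` is annihilated by right multiplication by
`δ = d ⊗ 1 - 1 ⊗ d`, then `f_ij = 0` whenever `i + j < p - 1`. -/
theorem statement16 (k : Type) [Field k] (p : ℕ) (hp : p.Prime) [CharP k p]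
    (f : Fin p → Fin p → Polynomial k)
    (hker : rdelta k p (∑ i : Fin p, ∑ j : Fin p,
        f i j • ((Bd k p ^ (i : ℕ)) ⊗ₜ[Polynomial k] (Bd k p ^ (j : ℕ)))) = 0) :
    ∀ i j : Fin p, (i : ℕ) + (j : ℕ) < p - 1 → f i j = 0 := by
  classical
  -- Step 1: evaluate each coefficient functional on the kernel condition.
  have key : ∀ a b : ℕ, a < p → b < p →
      (∑ i : Fin p, ∑ j : Fin p, f i j *
        ((if (i : ℕ) + 1 = a then (1 : Polynomial k) else 0) *
            (if (j : ℕ) = b then 1 else 0) -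
          (if (i : ℕ) = a then 1 else 0) * (if (j : ℕ) + 1 = b then 1 else 0))) = 0 := by
    intro a b ha hb
    have h0 : lam k p hp a b (rdelta k p (∑ i : Fin p, ∑ j : Fin p,
        f i j • ((Bd k p ^ (i : ℕ)) ⊗ₜ[Polynomial k] (Bd k p ^ (j : ℕ))))) = 0 := by
      rw [hker]; exact map_zero _
    have hterm : ∀ i j : Fin p,
        lam k p hp a b (rdelta k p
          (f i j • ((Bd k p ^ (i : ℕ)) ⊗ₜ[Polynomial k] (Bd k p ^ (j : ℕ))))) =
        f i j * ((if (i : ℕ) + 1 = a then (1 : Polynomial k) else 0) *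
            (if (j : ℕ) = b then 1 else 0) -
          (if (i : ℕ) = a then 1 else 0) * (if (j : ℕ) + 1 = b then 1 else 0)) := by
      intro i j
      rw [map_smul (rdelta k p), map_smul (lam k p hp a b), smul_eq_mul]
      congr 1
      have hrd : rdelta k p ((Bd k p ^ (i : ℕ)) ⊗ₜ[Polynomial k] (Bd k p ^ (j : ℕ))) =
          (Bd k p ^ ((i : ℕ) + 1)) ⊗ₜ[Polynomial k] (Bd k p ^ (j : ℕ)) -
            (Bd k p ^ (i : ℕ)) ⊗ₜ[Polynomial k] (Bd k p ^ ((j : ℕ) + 1)) := by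
        rw [rdelta, LinearMap.sub_apply, TensorProduct.map_tmul, TensorProduct.map_tmul,
          pow_succ, pow_succ]
        rfl
      rw [hrd, map_sub, lam_tmul, lam_tmul,
        cB_pow k p hp a ((i : ℕ) + 1) ha, cB_pow k p hp b (j : ℕ) hb,
        cB_pow k p hp a (i : ℕ) ha, cB_pow k p hp b ((j : ℕ) + 1) hb]
    simp only [map_sum] at h0
    exact (Finset.sum_congr rfl fun i _ =>
      Finset.sum_congr rfl fun j _ => (hterm i j).symm).trans h0
  -- Step 2: induction along antidiagonals (induction on the second index).
  have main : ∀ n : ℕ, ∀ i j : Fin p, (j : ℕ) = n → (i : ℕ) + (j : ℕ) < p - 1 → f i j = 0 := by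
    intro n
    induction n using Nat.strong_induction_on with
    | _ n ih =>
      intro i j hjn hij
      have hp2 : 2 ≤ p := hp.two_le
      have hi1 : (i : ℕ) + 1 < p := by omega
      have hk := key ((i : ℕ) + 1) (j : ℕ) hi1 j.isLt
      simp only [mul_sub, Finset.sum_sub_distrib] at hk
      have s1 : (∑ i' : Fin p, ∑ j' : Fin p, f i' j' *
          ((if (i' : ℕ) + 1 = (i : ℕ) + 1 then (1 : Polynomial k) else 0) *
            (if (j' : ℕ) = (j : ℕ) then 1 else 0))) = f i j := by
        have hcond : ∀ i' j' : Fin p, f i' j' *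
            ((if (i' : ℕ) + 1 = (i : ℕ) + 1 then (1 : Polynomial k) else 0) *
              (if (j' : ℕ) = (j : ℕ) then 1 else 0)) =
            if i' = i then (if j' = j then f i' j' else 0) else 0 := by
          intro i' j'
          by_cases h1 : i' = i <;> by_cases h2 : j' = j
          · subst h1; subst h2; simp
          · have : (j' : ℕ) ≠ (j : ℕ) := fun h => h2 (Fin.ext h)
            simp [h1, h2, this]
          · have : (i' : ℕ) ≠ (i : ℕ) := fun h => h1 (Fin.ext h)
            simp [h1, h2, this]
          · have e1 : (i' : ℕ) ≠ (i : ℕ) := fun h => h1 (Fin.ext h)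
            have e2 : (j' : ℕ) ≠ (j : ℕ) := fun h => h2 (Fin.ext h)
            simp [h1, h2, e1, e2]
        simp only [hcond]
        rw [Finset.sum_eq_single i]
        · rw [Finset.sum_eq_single j]
          · simp
          · intro b _ hb; simp [hb]
          · intro h; exact absurd (Finset.mem_univ j) h
        · intro b _ hb; simp [hb]
        · intro h; exact absurd (Finset.mem_univ i) h
      have s2 : (∑ i' : Fin p, ∑ j' : Fin p, f i' j' *
          ((if (i' : ℕ) = (i : ℕ) + 1 then (1 : Polynomial k) else 0) *
            (if (j' : ℕ) + 1 = (j : ℕ) then 1 else 0))) = 0 := by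
        rcases Nat.eq_zero_or_pos (j : ℕ) with hj0 | hjpos
        · refine Finset.sum_eq_zero fun i' _ => Finset.sum_eq_zero fun j' _ => ?_
          rw [hj0]
          simp
        · set i1 : Fin p := ⟨(i : ℕ) + 1, hi1⟩ with hi1def
          set j1 : Fin p := ⟨(j : ℕ) - 1, by omega⟩ with hj1def
          have hf0 : f i1 j1 = 0 := by
            refine ih ((j : ℕ) - 1) (by omega) i1 j1 rfl ?_
            show (i : ℕ) + 1 + ((j : ℕ) - 1) < p - 1
            omega
          have hcond : ∀ i' j' : Fin p, f i' j' *
              ((if (i' : ℕ) = (i : ℕ) + 1 then (1 : Polynomial k) else 0) *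
                (if (j' : ℕ) + 1 = (j : ℕ) then 1 else 0)) =
              if i' = i1 then (if j' = j1 then f i' j' else 0) else 0 := by
            intro i' j'
            have e1 : (i' = i1) ↔ ((i' : ℕ) = (i : ℕ) + 1) := by
              rw [Fin.ext_iff]
            have e2 : (j' = j1) ↔ ((j' : ℕ) + 1 = (j : ℕ)) := by
              rw [Fin.ext_iff]
              show (j' : ℕ) = (j : ℕ) - 1 ↔ _
              omega
            by_cases h1 : (i' : ℕ) = (i : ℕ) + 1 <;> by_cases h2 : (j' : ℕ) + 1 = (j : ℕ) <;>
              simp [h1, h2, e1, e2]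
          simp only [hcond]
          rw [Finset.sum_eq_single i1]
          · rw [Finset.sum_eq_single j1]
            · simp [hf0]
            · intro b _ hb; simp [hb]
            · intro h; exact absurd (Finset.mem_univ j1) h
          · intro b _ hb; simp [hb]
          · intro h; exact absurd (Finset.mem_univ i1) h
      rw [s1, s2, sub_zero] at hk
      exact hk
  intro i j hij
  exact main (j : ℕ) i j rfl hij
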